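/- The two maps S = \sum_{\ell=0}^d F_\ell E^*_\ell and T = \sum_{\ell=0}^d E^*_\ell F_\ell in End(V) are mutually inverse bijections; moreover S sends E^*_i V onto F_i V and T sends F_i V onto E^*_i V for 0 \le i \le d. -/

import Mathlib

/-- The maps `S = ∑ F_ℓ E*_ℓ` and `T = ∑ E*_ℓ F_ℓ` are mutually inverse
bijections; `S` sends `E*_i V` onto `F_i V` and `T` sends `F_i V` onto `E*_i V`. -/
theorem stmt0 {F V : Type*} [Field F] [AddCommGroup V] [Module F V]
    [FiniteDimensional F V] [Nontrivial V] (d : ℕ) (hd : 1 ≤ d)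
    (Es Fi : ℕ → Module.End F V)
    (hEsEs : ∀ i ≤ d, ∀ j ≤ d, Es i * Es j = if i = j then Es i else 0)
    (hFF : ∀ i ≤ d, ∀ j ≤ d, Fi i * Fi j = if i = j then Fi i else 0)
    (hEssum : ∑ i ∈ Finset.range (d + 1), Es i = 1)
    (hFsum : ∑ i ∈ Finset.range (d + 1), Fi i = 1)
    (hFE : ∀ i j, i < j → j ≤ d → Fi j * Es i = 0)
    (hEF : ∀ i j, i < j → j ≤ d → Es j * Fi i = 0) :
    (∑ l ∈ Finset.range (d + 1), Fi l * Es l) *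
        (∑ l ∈ Finset.range (d + 1), Es l * Fi l) = 1 ∧
    (∑ l ∈ Finset.range (d + 1), Es l * Fi l) *
        (∑ l ∈ Finset.range (d + 1), Fi l * Es l) = 1 ∧
    (∀ i ≤ d, Submodule.map (∑ l ∈ Finset.range (d + 1), Fi l * Es l)
        (LinearMap.range (Es i)) = LinearMap.range (Fi i)) ∧
    (∀ i ≤ d, Submodule.map (∑ l ∈ Finset.range (d + 1), Es l * Fi l)
        (LinearMap.range (Fi i)) = LinearMap.range (Es i)) := by
  set S := ∑ l ∈ Finset.range (d + 1), Fi l * Es l with hS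
  set T := ∑ l ∈ Finset.range (d + 1), Es l * Fi l with hT
  -- F_l E*_l F_l = F_l
  have key1 : ∀ l ≤ d, Fi l * Es l * Fi l = Fi l := by
    intro l hl
    have h0 : ∑ m ∈ Finset.range (d + 1), Fi l * Es m * Fi l = Fi l := by
      have h : (∑ m ∈ Finset.range (d + 1), Fi l * Es m * Fi l)
          = Fi l * (∑ m ∈ Finset.range (d + 1), Es m) * Fi l := by
        rw [Finset.mul_sum, Finset.sum_mul]
      rw [h, hEssum, mul_one]
      simpa using hFF l hl l hl
    have h1 : ∑ m ∈ Finset.range (d + 1), Fi l * Es m * Fi l = Fi l * Es l * Fi l := by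
      apply Finset.sum_eq_single_of_mem l (Finset.mem_range.2 (Nat.lt_succ_of_le hl))
      intro m hm hml
      rcases lt_or_gt_of_ne hml with h | h
      · rw [hFE m l h hl, zero_mul]
      · rw [mul_assoc, hEF l m h (Nat.lt_succ_iff.mp (Finset.mem_range.1 hm)), mul_zero]
    rw [← h1, h0]
  -- E*_l F_l E*_l = E*_l
  have key2 : ∀ l ≤ d, Es l * Fi l * Es l = Es l := by
    intro l hl
    have h0 : ∑ m ∈ Finset.range (d + 1), Es l * Fi m * Es l = Es l := by
      have h : (∑ m ∈ Finset.range (d + 1), Es l * Fi m * Es l)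
          = Es l * (∑ m ∈ Finset.range (d + 1), Fi m) * Es l := by
        rw [Finset.mul_sum, Finset.sum_mul]
      rw [h, hFsum, mul_one]
      simpa using hEsEs l hl l hl
    have h1 : ∑ m ∈ Finset.range (d + 1), Es l * Fi m * Es l = Es l * Fi l * Es l := by
      apply Finset.sum_eq_single_of_mem l (Finset.mem_range.2 (Nat.lt_succ_of_le hl))
      intro m hm hml
      rcases lt_or_gt_of_ne hml with h | h
      · rw [hEF m l h hl, zero_mul]
      · rw [mul_assoc, hFE l m h (Nat.lt_succ_iff.mp (Finset.mem_range.1 hm)), mul_zero]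
    rw [← h1, h0]
  have hST : S * T = 1 := by
    rw [hS, hT, Finset.sum_mul_sum]
    have h1 : ∀ l ∈ Finset.range (d + 1),
        (∑ m ∈ Finset.range (d + 1), (Fi l * Es l) * (Es m * Fi m)) = Fi l := by
      intro l hl
      have hld := Nat.lt_succ_iff.mp (Finset.mem_range.1 hl)
      have h2 : (∑ m ∈ Finset.range (d + 1), (Fi l * Es l) * (Es m * Fi m))
          = (Fi l * Es l) * (Es l * Fi l) := by
        apply Finset.sum_eq_single_of_mem l hl
        intro m hm hml
        have hmd := Nat.lt_succ_iff.mp (Finset.mem_range.1 hm)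
        have hz : Es l * Es m = 0 := by rw [hEsEs l hld m hmd, if_neg (Ne.symm hml)]
        rw [show (Fi l * Es l) * (Es m * Fi m) = Fi l * (Es l * Es m) * Fi m by
          noncomm_ring, hz, mul_zero, zero_mul]
      rw [h2]
      have hEidem : Es l * Es l = Es l := by simpa using hEsEs l hld l hld
      calc (Fi l * Es l) * (Es l * Fi l) = Fi l * (Es l * Es l) * Fi l := by noncomm_ring
        _ = Fi l * Es l * Fi l := by rw [hEidem]
        _ = Fi l := key1 l hld
    rw [Finset.sum_congr rfl h1, hFsum]
  have hTS : T * S = 1 := by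
    rw [hS, hT, Finset.sum_mul_sum]
    have h1 : ∀ l ∈ Finset.range (d + 1),
        (∑ m ∈ Finset.range (d + 1), (Es l * Fi l) * (Fi m * Es m)) = Es l := by
      intro l hl
      have hld := Nat.lt_succ_iff.mp (Finset.mem_range.1 hl)
      have h2 : (∑ m ∈ Finset.range (d + 1), (Es l * Fi l) * (Fi m * Es m))
          = (Es l * Fi l) * (Fi l * Es l) := by
        apply Finset.sum_eq_single_of_mem l hl
        intro m hm hml
        have hmd := Nat.lt_succ_iff.mp (Finset.mem_range.1 hm)
        have hz : Fi l * Fi m = 0 := by rw [hFF l hld m hmd, if_neg (Ne.symm hml)]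
        rw [show (Es l * Fi l) * (Fi m * Es m) = Es l * (Fi l * Fi m) * Es m by
          noncomm_ring, hz, mul_zero, zero_mul]
      rw [h2]
      have hFidem : Fi l * Fi l = Fi l := by simpa using hFF l hld l hld
      calc (Es l * Fi l) * (Fi l * Es l) = Es l * (Fi l * Fi l) * Es l := by noncomm_ring
        _ = Es l * Fi l * Es l := by rw [hFidem]
        _ = Es l := key2 l hld
    rw [Finset.sum_congr rfl h1, hEssum]
  -- S * Es i = Fi i * Es i
  have hSE : ∀ i ≤ d, S * Es i = Fi i * Es i := by
    intro i hi
    have hEidem : Es i * Es i = Es i := by simpa using hEsEs i hi i hi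
    have h1 : ∑ l ∈ Finset.range (d + 1), Fi l * Es l * Es i
        = Fi i * Es i * Es i := by
      apply Finset.sum_eq_single_of_mem i (Finset.mem_range.2 (Nat.lt_succ_of_le hi))
      intro m hm hmi
      have hmd := Nat.lt_succ_iff.mp (Finset.mem_range.1 hm)
      have hz : Es m * Es i = 0 := by rw [hEsEs m hmd i hi, if_neg hmi]
      rw [mul_assoc, hz, mul_zero]
    rw [hS, Finset.sum_mul, h1, mul_assoc, hEidem]
  have hTF : ∀ i ≤ d, T * Fi i = Es i * Fi i := by
    intro i hi
    have hFidem : Fi i * Fi i = Fi i := by simpa using hFF i hi i hi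
    have h1 : ∑ l ∈ Finset.range (d + 1), Es l * Fi l * Fi i
        = Es i * Fi i * Fi i := by
      apply Finset.sum_eq_single_of_mem i (Finset.mem_range.2 (Nat.lt_succ_of_le hi))
      intro m hm hmi
      have hmd := Nat.lt_succ_iff.mp (Finset.mem_range.1 hm)
      have hz : Fi m * Fi i = 0 := by rw [hFF m hmd i hi, if_neg hmi]
      rw [mul_assoc, hz, mul_zero]
    rw [hT, Finset.sum_mul, h1, mul_assoc, hFidem]
  have hrange : ∀ f g : Module.End F V, LinearMap.range (f * g) ≤ LinearMap.range f := by
    intro f g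
    rw [Module.End.mul_eq_comp, LinearMap.range_comp]
    exact LinearMap.map_le_range
  refine ⟨hST, hTS, ?_, ?_⟩
  · intro i hi
    have h1 : Submodule.map S (LinearMap.range (Es i)) = LinearMap.range (S * Es i) := by
      rw [Module.End.mul_eq_comp, LinearMap.range_comp]
    rw [h1, hSE i hi]
    apply le_antisymm
    · exact hrange _ _
    · have h2 : Fi i = (Fi i * Es i) * (Es i * Fi i) := by
        have hEidem : Es i * Es i = Es i := by simpa using hEsEs i hi i hi
        calc Fi i = Fi i * Es i * Fi i := (key1 i hi).symm
          _ = Fi i * (Es i * Es i) * Fi i := by rw [hEidem]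
          _ = (Fi i * Es i) * (Es i * Fi i) := by noncomm_ring
      conv_lhs => rw [h2]
      exact hrange _ _
  · intro i hi
    have h1 : Submodule.map T (LinearMap.range (Fi i)) = LinearMap.range (T * Fi i) := by
      rw [Module.End.mul_eq_comp, LinearMap.range_comp]
    rw [h1, hTF i hi]
    apply le_antisymm
    · exact hrange _ _
    · have h2 : Es i = (Es i * Fi i) * (Fi i * Es i) := by
        have hFidem : Fi i * Fi i = Fi i := by simpa using hFF i hi i hi
        calc Es i = Es i * Fi i * Es i := (key2 i hi).symm
          _ = Es i * (Fi i * Fi i) * Es i := by rw [hFidem]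
          _ = (Es i * Fi i) * (Fi i * Es i) := by noncomm_ring
      conv_lhs => rw [h2]
      exact hrange _ _
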